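/- Let f : Finset(V) × X → ℝ be adaptive monotone and ζ-weakly adaptive submodular for some constant ζ ≥ 1. Let ψ be a partial realization with P[ψ] > 0, let π be any policy, and let k ≥ 1. Define the conditional expected marginal benefit of the policy π as Δ(π|ψ) := P[ψ]^{-1} · ∑_{x consistent with ψ} p(x)·(f(acts(ψ) ∪ V(π,k,x), x) − f(acts(ψ), x)). Then Δ(π|ψ) ≤ ζ · max_{A ⊆ V, |A| ≤ k} ∑_{v∈A} Δ(v|ψ). -/

import Mathlib

attribute [local instance] Classical.propDecidable

noncomputable section

/-- A state `x` is consistent with partial realization `ψ` if every recorded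
action–outcome pair agrees with the outcome model `μ`. -/
def Consistent {X V Y : Type*} (μ : V → X → Y) (x : X) (ψ : Finset (V × Y)) : Prop :=
  ∀ e ∈ ψ, μ e.1 x = e.2

/-- The set of actions occurring in a partial realization. -/
def acts {V Y : Type*} (ψ : Finset (V × Y)) : Finset V := ψ.image Prod.fst

/-- `P[ψ]`: total prior probability of the states consistent with `ψ`. -/
def probP {X V Y : Type*} [Fintype X] (p : X → ℝ) (μ : V → X → Y)
    (ψ : Finset (V × Y)) : ℝ :=
  ∑ x ∈ Finset.univ.filter (fun x => Consistent μ x ψ), p x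

/-- Conditional expected marginal benefit `Δ(v|ψ)` of action `v` given `ψ`. -/
def margBen {X V Y : Type*} [Fintype X] (p : X → ℝ) (μ : V → X → Y)
    (f : Finset V → X → ℝ) (v : V) (ψ : Finset (V × Y)) : ℝ :=
  (probP p μ ψ)⁻¹ *
    ∑ x ∈ Finset.univ.filter (fun x => Consistent μ x ψ),
      p x * (f (insert v (acts ψ)) x - f (acts ψ) x)

/-- Adaptive monotonicity: every conditional expected marginal benefit is nonnegative. -/
def AdaptiveMonotone {X V Y : Type*} [Fintype X] (p : X → ℝ) (μ : V → X → Y)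
    (f : Finset V → X → ℝ) : Prop :=
  ∀ (v : V) (ψ : Finset (V × Y)), 0 < probP p μ ψ → 0 ≤ margBen p μ f v ψ

/-- `ζ`-weak adaptive submodularity. -/
def WeakAdaptiveSubmodular {X V Y : Type*} [Fintype X] (p : X → ℝ) (μ : V → X → Y)
    (f : Finset V → X → ℝ) (ζ : ℝ) : Prop :=
  ∀ ψ ψ' : Finset (V × Y), ψ ⊆ ψ' → 0 < probP p μ ψ' →
    ∀ v ∉ acts ψ', margBen p μ f v ψ' ≤ ζ * margBen p μ f v ψ

/-- History of action–outcome pairs generated by running policy `π` for `t`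
steps under true state `x`. -/
def hist {X V Y : Type*} (μ : V → X → Y) (π : List (V × Y) → V) (x : X) :
    ℕ → List (V × Y)
  | 0 => []
  | t + 1 =>
      hist μ π x t ++ [(π (hist μ π x t), μ (π (hist μ π x t)) x)]

/-- The set of actions appearing in a history. -/
def actsOf {V Y : Type*} (h : List (V × Y)) : Finset V := (h.map Prod.fst).toFinset

/-- Average reward `f_avg(π, t)` of policy `π` at horizon `t`. -/
def favg {X V Y : Type*} [Fintype X] (p : X → ℝ) (μ : V → X → Y)
    (f : Finset V → X → ℝ) (π : List (V × Y) → V) (t : ℕ) : ℝ :=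
  ∑ x, p x * f (actsOf (hist μ π x t)) x

/-- A greedy policy: at every history reachable under some state of positive
prior probability, the chosen action maximizes the conditional expected
marginal benefit. -/
def IsGreedy {X V Y : Type*} [Fintype X] (p : X → ℝ) (μ : V → X → Y)
    (f : Finset V → X → ℝ) (π : List (V × Y) → V) : Prop :=
  ∀ x : X, 0 < p x → ∀ t : ℕ, ∀ v : V,
    margBen p μ f v (hist μ π x t).toFinset ≤
      margBen p μ f (π (hist μ π x t)) (hist μ π x t).toFinset

section Aux

variable {X V Y : Type*} (μ : V → X → Y) (π : List (V × Y) → V) (x : X)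

lemma hist_succ (t : ℕ) : hist μ π x (t + 1) =
    hist μ π x t ++ [(π (hist μ π x t), μ (π (hist μ π x t)) x)] := rfl

lemma consistent_union {x : X} {ψ ψ' : Finset (V × Y)} :
    Consistent μ x (ψ ∪ ψ') ↔ Consistent μ x ψ ∧ Consistent μ x ψ' := by
  simp [Consistent, Finset.mem_union, or_imp, forall_and]

lemma consistent_self_hist (t : ℕ) : Consistent μ x (hist μ π x t).toFinset := by
  induction t with
  | zero => simp [Consistent, hist]
  | succ t ih =>
    intro e he
    rw [hist_succ, List.toFinset_append] at he
    rcases Finset.mem_union.mp he with h1 | h2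
    · exact ih e h1
    · simp only [List.toFinset_cons, List.toFinset_nil, LawfulSingleton.insert_empty_eq,
        Finset.mem_singleton] at h2
      subst h2; rfl

lemma hist_eq_of_consistent (x' : X) (t : ℕ)
    (h : Consistent μ x' (hist μ π x t).toFinset) :
    hist μ π x' t = hist μ π x t := by
  induction t with
  | zero => rfl
  | succ t ih =>
    have hsub : Consistent μ x' (hist μ π x t).toFinset := by
      intro e he
      refine h e ?_
      rw [hist_succ, List.toFinset_append]
      exact Finset.mem_union_left _ he
    have heq := ih hsub
    have hv : μ (π (hist μ π x t)) x' = μ (π (hist μ π x t)) x := by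
      have hm : (π (hist μ π x t), μ (π (hist μ π x t)) x) ∈
          (hist μ π x (t + 1)).toFinset := by
        rw [hist_succ, List.toFinset_append]
        simp
      exact h _ hm
    rw [hist_succ, hist_succ, heq, hv]

lemma consistent_hist_iff (x' : X) (t : ℕ) :
    Consistent μ x' (hist μ π x t).toFinset ↔ hist μ π x' t = hist μ π x t := by
  constructor
  · exact hist_eq_of_consistent μ π x x' t
  · intro h; rw [← h]; exact consistent_self_hist μ π x' t

lemma acts_union (ψ ψ' : Finset (V × Y)) : acts (ψ ∪ ψ') = acts ψ ∪ acts ψ' :=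
  Finset.image_union _ _

lemma acts_toFinset (l : List (V × Y)) : acts l.toFinset = actsOf l := by
  ext v; simp [acts, actsOf]

lemma actsOf_hist_succ (t : ℕ) :
    actsOf (hist μ π x (t + 1)) =
      insert (π (hist μ π x t)) (actsOf (hist μ π x t)) := by
  rw [hist_succ]
  simp [actsOf]

lemma hist_prefix (i j : ℕ) (hij : i ≤ j) :
    ∃ t, hist μ π x j = hist μ π x i ++ t := by
  induction j, hij using Nat.le_induction with
  | base => exact ⟨[], by simp⟩
  | succ j hij ih =>
    obtain ⟨t, ht⟩ := ih
    exact ⟨t ++ [(π (hist μ π x j), μ (π (hist μ π x j)) x)],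
      by rw [hist_succ, ht, List.append_assoc]⟩

lemma pi_mem_actsOf (i j : ℕ) (hij : i < j) :
    π (hist μ π x i) ∈ actsOf (hist μ π x j) := by
  obtain ⟨t, ht⟩ := hist_prefix μ π x (i + 1) j hij
  rw [ht, hist_succ]
  simp [actsOf]

end Aux

/-- the conditional expected marginal benefit of any policy run
for `k` steps is at most `ζ` times the best sum of `k` single-action
conditional expected marginal benefits. -/
theorem policy_benefit_le_zeta_mul_max {X V Y : Type*}
    [Fintype X] [Nonempty X] [Fintype V] [Nonempty V] [Fintype Y] [Nonempty Y]
    (p : X → ℝ) (hp : ∀ x, 0 ≤ p x) (hpsum : ∑ x, p x = 1)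
    (μ : V → X → Y) (f : Finset V → X → ℝ)
    (hmono : AdaptiveMonotone p μ f)
    (ζ : ℝ) (hζ : 1 ≤ ζ)
    (hsub : WeakAdaptiveSubmodular p μ f ζ)
    (ψ : Finset (V × Y)) (hψ : 0 < probP p μ ψ)
    (π : List (V × Y) → V) (k : ℕ) (hk : 1 ≤ k) :
    (probP p μ ψ)⁻¹ *
        ∑ x ∈ Finset.univ.filter (fun x => Consistent μ x ψ),
          p x * (f (acts ψ ∪ actsOf (hist μ π x k)) x - f (acts ψ) x) ≤
      ζ * (Finset.univ.filter (fun A : Finset V => A.card ≤ k)).sup'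
          ⟨∅, by simp⟩ (fun A => ∑ v ∈ A, margBen p μ f v ψ) := by
  classical
  set M := (Finset.univ.filter (fun A : Finset V => A.card ≤ k)).sup'
      ⟨∅, by simp⟩ (fun A => ∑ v ∈ A, margBen p μ f v ψ) with hM
  set s := Finset.univ.filter (fun x => Consistent μ x ψ) with hs
  set B : X → ℕ → ℝ := fun x i =>
    if π (hist μ π x i) ∈ acts ψ ∪ actsOf (hist μ π x i) then 0
    else margBen p μ f (π (hist μ π x i)) ψ with hB
  have hζ0 : (0 : ℝ) ≤ ζ := le_trans zero_le_one hζ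
  -- key per-step fiberwise inequality
  have key : ∀ i : ℕ,
      (∑ x ∈ s, p x * (f (acts ψ ∪ actsOf (hist μ π x (i + 1))) x
        - f (acts ψ ∪ actsOf (hist μ π x i)) x))
      ≤ ζ * ∑ x ∈ s, p x * B x i := by
    intro i
    have hmaps : ∀ x ∈ s, hist μ π x i ∈ s.image (fun x => hist μ π x i) :=
      fun x hx => Finset.mem_image_of_mem _ hx
    rw [← Finset.sum_fiberwise_of_maps_to hmaps
        (fun x => p x * (f (acts ψ ∪ actsOf (hist μ π x (i + 1))) x
          - f (acts ψ ∪ actsOf (hist μ π x i)) x)),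
      ← Finset.sum_fiberwise_of_maps_to hmaps (fun x => p x * B x i),
      Finset.mul_sum]
    refine Finset.sum_le_sum ?_
    intro h hh
    obtain ⟨x₀, hx₀s, hx₀⟩ := Finset.mem_image.mp hh
    set ψ' := ψ ∪ h.toFinset with hψ'
    have hfe : s.filter (fun x => hist μ π x i = h)
        = Finset.univ.filter (fun x => Consistent μ x ψ') := by
      ext x
      simp only [hs, Finset.filter_filter, Finset.mem_filter, Finset.mem_univ, true_and,
        hψ', consistent_union]
      rw [← hx₀]
      rw [consistent_hist_iff μ π x₀ x i]
    have hT : ∀ x, Consistent μ x ψ' →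
        (acts ψ ∪ actsOf (hist μ π x i) = acts ψ') ∧
        (acts ψ ∪ actsOf (hist μ π x (i + 1)) = insert (π h) (acts ψ')) ∧
        π (hist μ π x i) = π h := by
      intro x hx
      have hxh : Consistent μ x h.toFinset := ((consistent_union μ).mp hx).2
      have hxe : hist μ π x i = h := by
        rw [← hx₀] at hxh ⊢
        exact (consistent_hist_iff μ π x₀ x i).mp hxh
      refine ⟨?_, ?_, by rw [hxe]⟩
      · rw [hxe, hψ', acts_union, acts_toFinset]
      · rw [actsOf_hist_succ, hxe, Finset.union_insert, hψ', acts_union, acts_toFinset]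
    rw [hfe]
    have hTsum : (∑ x ∈ Finset.univ.filter (fun x => Consistent μ x ψ'),
          p x * (f (acts ψ ∪ actsOf (hist μ π x (i + 1))) x
            - f (acts ψ ∪ actsOf (hist μ π x i)) x))
        = ∑ x ∈ Finset.univ.filter (fun x => Consistent μ x ψ'),
            p x * (f (insert (π h) (acts ψ')) x - f (acts ψ') x) := by
      refine Finset.sum_congr rfl fun x hx => ?_
      obtain ⟨h1, h2, -⟩ := hT x (Finset.mem_filter.mp hx).2
      rw [h1, h2]
    have hBsum : (∑ x ∈ Finset.univ.filter (fun x => Consistent μ x ψ'), p x * B x i)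
        = ∑ x ∈ Finset.univ.filter (fun x => Consistent μ x ψ'),
            p x * (if π h ∈ acts ψ' then 0 else margBen p μ f (π h) ψ) := by
      refine Finset.sum_congr rfl fun x hx => ?_
      obtain ⟨h1, -, h3⟩ := hT x (Finset.mem_filter.mp hx).2
      rw [hB]
      simp only [h3, h1]
    rw [hTsum, hBsum]
    by_cases hv : π h ∈ acts ψ'
    · simp [hv, Finset.insert_eq_self.mpr hv]
    · simp only [hv, if_neg, if_false]
      rw [← Finset.sum_mul]
      have hPd : (∑ x ∈ Finset.univ.filter (fun x => Consistent μ x ψ'), p x)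
          = probP p μ ψ' := rfl
      rw [hPd]
      have hP'0 : (0 : ℝ) ≤ probP p μ ψ' := Finset.sum_nonneg fun x _ => hp x
      rcases hP'0.lt_or_eq with hpos | hzero
      · have hm := hsub ψ ψ' Finset.subset_union_left hpos (π h) hv
        have hTeq : (∑ x ∈ Finset.univ.filter (fun x => Consistent μ x ψ'),
              p x * (f (insert (π h) (acts ψ')) x - f (acts ψ') x))
            = probP p μ ψ' * margBen p μ f (π h) ψ' := by
          rw [margBen, ← mul_assoc, mul_inv_cancel₀ (ne_of_gt hpos), one_mul]
        rw [hTeq]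
        calc probP p μ ψ' * margBen p μ f (π h) ψ'
            ≤ probP p μ ψ' * (ζ * margBen p μ f (π h) ψ) :=
              mul_le_mul_of_nonneg_left hm hP'0
          _ = ζ * (probP p μ ψ' * margBen p μ f (π h) ψ) := by ring
      · have hz : ∀ x ∈ Finset.univ.filter (fun x => Consistent μ x ψ'), p x = 0 :=
          (Finset.sum_eq_zero_iff_of_nonneg (fun x _ => hp x)).mp hzero.symm
        rw [Finset.sum_eq_zero (fun x hx => by rw [hz x hx, zero_mul]), ← hzero]
        simp
  -- per-state bound on the sum of singleton benefits
  have stepB : ∀ x : X, (∑ i ∈ Finset.range k, B x i) ≤ M := by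
    intro x
    set I := (Finset.range k).filter
        (fun i => π (hist μ π x i) ∉ acts ψ ∪ actsOf (hist μ π x i)) with hI
    have h1 : (∑ i ∈ Finset.range k, B x i)
        = ∑ i ∈ I, margBen p μ f (π (hist μ π x i)) ψ := by
      rw [hI, Finset.sum_filter]
      refine Finset.sum_congr rfl fun i _ => ?_
      by_cases hc : π (hist μ π x i) ∈ acts ψ ∪ actsOf (hist μ π x i)
      · simp only [hB, hc, if_true, not_true_eq_false, if_false]
      · simp only [hB, hc, if_false, not_false_eq_true, if_true]
    have hinj : ∀ i ∈ I, ∀ j ∈ I,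
        π (hist μ π x i) = π (hist μ π x j) → i = j := by
      intro i hi j hj hij
      by_contra hne
      rcases lt_trichotomy i j with hlt | heq | hlt
      · have hmem := pi_mem_actsOf μ π x i j hlt
        rw [hij] at hmem
        exact (Finset.mem_filter.mp hj).2 (Finset.mem_union_right _ hmem)
      · exact hne heq
      · have hmem := pi_mem_actsOf μ π x j i hlt
        rw [← hij] at hmem
        exact (Finset.mem_filter.mp hi).2 (Finset.mem_union_right _ hmem)
    have h2 : (∑ i ∈ I, margBen p μ f (π (hist μ π x i)) ψ)
        = ∑ v ∈ I.image (fun i => π (hist μ π x i)), margBen p μ f v ψ :=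
      (Finset.sum_image (f := fun v => margBen p μ f v ψ) hinj).symm
    have hcard : (I.image (fun i => π (hist μ π x i))).card ≤ k :=
      le_trans Finset.card_image_le (le_trans (Finset.card_filter_le _ _) (by simp))
    rw [h1, h2, hM]
    exact Finset.le_sup' (fun A => ∑ v ∈ A, margBen p μ f v ψ)
      (Finset.mem_filter.mpr ⟨Finset.mem_univ _, hcard⟩)
  -- assemble
  have hsum1 : (∑ x ∈ s, p x * (f (acts ψ ∪ actsOf (hist μ π x k)) x - f (acts ψ) x))
      ≤ ζ * (probP p μ ψ * M) := by
    have tele : ∀ x ∈ s,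
        p x * (f (acts ψ ∪ actsOf (hist μ π x k)) x - f (acts ψ) x)
        = ∑ i ∈ Finset.range k, p x * (f (acts ψ ∪ actsOf (hist μ π x (i + 1))) x
            - f (acts ψ ∪ actsOf (hist μ π x i)) x) := by
      intro x _
      rw [← Finset.mul_sum,
        Finset.sum_range_sub (fun i => f (acts ψ ∪ actsOf (hist μ π x i)) x)]
      have h0 : acts ψ ∪ actsOf (hist μ π x 0) = acts ψ := by
        simp [hist, actsOf]
      rw [h0]
    calc (∑ x ∈ s, p x * (f (acts ψ ∪ actsOf (hist μ π x k)) x - f (acts ψ) x))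
        = ∑ x ∈ s, ∑ i ∈ Finset.range k,
            p x * (f (acts ψ ∪ actsOf (hist μ π x (i + 1))) x
              - f (acts ψ ∪ actsOf (hist μ π x i)) x) := Finset.sum_congr rfl tele
      _ = ∑ i ∈ Finset.range k, ∑ x ∈ s,
            p x * (f (acts ψ ∪ actsOf (hist μ π x (i + 1))) x
              - f (acts ψ ∪ actsOf (hist μ π x i)) x) := Finset.sum_comm
      _ ≤ ∑ i ∈ Finset.range k, ζ * ∑ x ∈ s, p x * B x i :=
            Finset.sum_le_sum fun i _ => key i
      _ = ζ * ∑ x ∈ s, p x * ∑ i ∈ Finset.range k, B x i := by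
            rw [← Finset.mul_sum]
            congr 1
            rw [Finset.sum_comm]
            exact Finset.sum_congr rfl fun x _ => (Finset.mul_sum _ _ _).symm
      _ ≤ ζ * ∑ x ∈ s, p x * M := by
            refine mul_le_mul_of_nonneg_left (Finset.sum_le_sum fun x _ => ?_) hζ0
            exact mul_le_mul_of_nonneg_left (stepB x) (hp x)
      _ = ζ * (probP p μ ψ * M) := by rw [← Finset.sum_mul]; rfl
  have hinv : (0 : ℝ) ≤ (probP p μ ψ)⁻¹ := inv_nonneg.mpr hψ.le
  calc (probP p μ ψ)⁻¹ *
        ∑ x ∈ Finset.univ.filter (fun x => Consistent μ x ψ),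
          p x * (f (acts ψ ∪ actsOf (hist μ π x k)) x - f (acts ψ) x)
      ≤ (probP p μ ψ)⁻¹ * (ζ * (probP p μ ψ * M)) :=
        mul_le_mul_of_nonneg_left hsum1 hinv
    _ = ζ * M * ((probP p μ ψ)⁻¹ * probP p μ ψ) := by ring
    _ = ζ * M := by rw [inv_mul_cancel₀ (ne_of_gt hψ), mul_one]
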